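/- arXiv:1707.09799 — 2 statements merged into one kernel-verified Lean document; each statement's English description precedes it below -/
import Mathlib

section
/- Suppose ι is defined on product admissible pairs by ι(f × g, U × V) = ind_n(f,U) · ind_m(g,V), where ind_n and ind_m satisfy additivity and the solution property. If Fix(f × g) ∩ (U × V) ⊆ (U₁ × V₁) ⊔ (U₂ × V₂) with U₁,U₂ disjoint open and V₁,V₂ disjoint open, then ι(f × g, U × V) = ι(f × g, U₁ × V₁) + ι(f × g, U₂ × V₂). -/
/-- The product index ι(f × g, U × V) = ind_n(f,U)·ind_m(g,V) satisfies additivity,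
given that ind_n and ind_m satisfy additivity and the solution property. -/
theorem product_index_additivity {X Y : Type*} [TopologicalSpace X] [TopologicalSpace Y]
    {n m : ℕ}
    (indn : (X → Finset X) → Set X → ℝ) (indm : (Y → Finset Y) → Set Y → ℝ)
    (haddn : ∀ (f : X → Finset X), (∀ x, (f x).card = n) →
      ∀ U U₁ U₂ : Set X, IsOpen U → IsCompact {x | x ∈ U ∧ x ∈ f x} →
      IsOpen U₁ → IsOpen U₂ → U₁ ⊆ U → U₂ ⊆ U → Disjoint U₁ U₂ →
      {x | x ∈ U ∧ x ∈ f x} ⊆ U₁ ∪ U₂ → indn f U = indn f U₁ + indn f U₂)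
    (haddm : ∀ (g : Y → Finset Y), (∀ y, (g y).card = m) →
      ∀ V V₁ V₂ : Set Y, IsOpen V → IsCompact {y | y ∈ V ∧ y ∈ g y} →
      IsOpen V₁ → IsOpen V₂ → V₁ ⊆ V → V₂ ⊆ V → Disjoint V₁ V₂ →
      {y | y ∈ V ∧ y ∈ g y} ⊆ V₁ ∪ V₂ → indm g V = indm g V₁ + indm g V₂)
    (hsoln : ∀ (f : X → Finset X), (∀ x, (f x).card = n) →
      ∀ U : Set X, IsOpen U → IsCompact {x | x ∈ U ∧ x ∈ f x} →
      indn f U ≠ 0 → {x | x ∈ U ∧ x ∈ f x}.Nonempty)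
    (hsolm : ∀ (g : Y → Finset Y), (∀ y, (g y).card = m) →
      ∀ V : Set Y, IsOpen V → IsCompact {y | y ∈ V ∧ y ∈ g y} →
      indm g V ≠ 0 → {y | y ∈ V ∧ y ∈ g y}.Nonempty)
    (f : X → Finset X) (hf : ∀ x, (f x).card = n)
    (g : Y → Finset Y) (hg : ∀ y, (g y).card = m)
    (U U₁ U₂ : Set X) (V V₁ V₂ : Set Y)
    (hU : IsOpen U) (hV : IsOpen V)
    (hUc : IsCompact {x | x ∈ U ∧ x ∈ f x}) (hVc : IsCompact {y | y ∈ V ∧ y ∈ g y})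
    (hU₁ : IsOpen U₁) (hU₂ : IsOpen U₂) (hV₁ : IsOpen V₁) (hV₂ : IsOpen V₂)
    (hU₁U : U₁ ⊆ U) (hU₂U : U₂ ⊆ U) (hV₁V : V₁ ⊆ V) (hV₂V : V₂ ⊆ V)
    (hUd : Disjoint U₁ U₂) (hVd : Disjoint V₁ V₂)
    (hcover : {p : X × Y | p ∈ (f p.1) ×ˢ (g p.2)} ∩ (U ×ˢ V) ⊆
      (U₁ ×ˢ V₁) ∪ (U₂ ×ˢ V₂)) :
    indn f U * indm g V = indn f U₁ * indm g V₁ + indn f U₂ * indm g V₂ := by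

  -- helper: if the fixed point set in an open set is empty, the index is 0
  have zeroX : ∀ W : Set X, IsOpen W → {x | x ∈ W ∧ x ∈ f x} = ∅ → indn f W = 0 := by
    intro W hW hemp
    by_contra h
    have := hsoln f hf W hW (by rw [hemp]; exact isCompact_empty) h
    rw [hemp] at this; exact Set.not_nonempty_empty this
  have zeroY : ∀ W : Set Y, IsOpen W → {y | y ∈ W ∧ y ∈ g y} = ∅ → indm g W = 0 := by
    intro W hW hemp
    by_contra h
    have := hsolm g hg W hW (by rw [hemp]; exact isCompact_empty) h
    rw [hemp] at this; exact Set.not_nonempty_empty this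
  -- cross terms vanish
  have hcross : ∀ (A : Set X) (B : Set Y), IsOpen A → IsOpen B → A ⊆ U → B ⊆ V →
      (∀ p : X × Y, p.1 ∈ A → p.2 ∈ B → ¬ (p ∈ (U₁ ×ˢ V₁) ∪ (U₂ ×ˢ V₂))) →
      indn f A * indm g B = 0 := by
    intro A B hA hB hAU hBV hno
    by_cases hAe : {x | x ∈ A ∧ x ∈ f x} = ∅
    · rw [zeroX A hA hAe, zero_mul]
    · rcases Set.nonempty_iff_ne_empty.2 hAe with ⟨x, hxA, hxf⟩
      by_cases hBe : {y | y ∈ B ∧ y ∈ g y} = ∅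
      · rw [zeroY B hB hBe, mul_zero]
      · rcases Set.nonempty_iff_ne_empty.2 hBe with ⟨y, hyB, hyg⟩
        exfalso
        apply hno (x, y) hxA hyB
        apply hcover
        constructor
        · exact Finset.mem_product.2 ⟨hxf, hyg⟩
        · exact ⟨hAU hxA, hBV hyB⟩
  by_cases hFe : {x | x ∈ U ∧ x ∈ f x} = ∅
  · have h1 : {x | x ∈ U₁ ∧ x ∈ f x} = ∅ := by
      ext x; simp only [Set.mem_setOf_eq, Set.mem_empty_iff_false, iff_false]
      rintro ⟨h1, h2⟩; exact (Set.eq_empty_iff_forall_notMem.1 hFe x) ⟨hU₁U h1, h2⟩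
    have h2 : {x | x ∈ U₂ ∧ x ∈ f x} = ∅ := by
      ext x; simp only [Set.mem_setOf_eq, Set.mem_empty_iff_false, iff_false]
      rintro ⟨h1, h2⟩; exact (Set.eq_empty_iff_forall_notMem.1 hFe x) ⟨hU₂U h1, h2⟩
    rw [zeroX U hU hFe, zeroX U₁ hU₁ h1, zeroX U₂ hU₂ h2]; ring
  by_cases hGe : {y | y ∈ V ∧ y ∈ g y} = ∅
  · have h1 : {y | y ∈ V₁ ∧ y ∈ g y} = ∅ := by
      ext y; simp only [Set.mem_setOf_eq, Set.mem_empty_iff_false, iff_false]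
      rintro ⟨h1, h2⟩; exact (Set.eq_empty_iff_forall_notMem.1 hGe y) ⟨hV₁V h1, h2⟩
    have h2 : {y | y ∈ V₂ ∧ y ∈ g y} = ∅ := by
      ext y; simp only [Set.mem_setOf_eq, Set.mem_empty_iff_false, iff_false]
      rintro ⟨h1, h2⟩; exact (Set.eq_empty_iff_forall_notMem.1 hGe y) ⟨hV₂V h1, h2⟩
    rw [zeroY V hV hGe, zeroY V₁ hV₁ h1, zeroY V₂ hV₂ h2]; ring
  rcases Set.nonempty_iff_ne_empty.2 hFe with ⟨x₀, hx₀U, hx₀f⟩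
  rcases Set.nonempty_iff_ne_empty.2 hGe with ⟨y₀, hy₀V, hy₀g⟩
  -- Fix(f) ∩ U ⊆ U₁ ∪ U₂
  have hUcov : {x | x ∈ U ∧ x ∈ f x} ⊆ U₁ ∪ U₂ := by
    rintro x ⟨hxU, hxf⟩
    have := hcover (a := (x, y₀)) ⟨Finset.mem_product.2 ⟨hxf, hy₀g⟩, ⟨hxU, hy₀V⟩⟩
    rcases this with h | h
    · exact Or.inl h.1
    · exact Or.inr h.1
  have hVcov : {y | y ∈ V ∧ y ∈ g y} ⊆ V₁ ∪ V₂ := by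
    rintro y ⟨hyV, hyg⟩
    have := hcover (a := (x₀, y)) ⟨Finset.mem_product.2 ⟨hx₀f, hyg⟩, ⟨hx₀U, hyV⟩⟩
    rcases this with h | h
    · exact Or.inl h.2
    · exact Or.inr h.2
  have eqn := haddn f hf U U₁ U₂ hU hUc hU₁ hU₂ hU₁U hU₂U hUd hUcov
  have eqm := haddm g hg V V₁ V₂ hV hVc hV₁ hV₂ hV₁V hV₂V hVd hVcov
  have hc12 : indn f U₁ * indm g V₂ = 0 := by
    apply hcross U₁ V₂ hU₁ hV₂ hU₁U hV₂V
    rintro ⟨x, y⟩ hx hy (⟨_, h⟩ | ⟨h, _⟩)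
    · exact (Set.disjoint_left.1 hVd h) hy
    · exact (Set.disjoint_left.1 hUd hx) h
  have hc21 : indn f U₂ * indm g V₁ = 0 := by
    apply hcross U₂ V₁ hU₂ hV₁ hU₂U hV₁V
    rintro ⟨x, y⟩ hx hy (⟨h, _⟩ | ⟨_, h⟩)
    · exact (Set.disjoint_left.1 hUd h) hx
    · exact (Set.disjoint_left.1 hVd hy) h
  rw [eqn, eqm]
  nlinarith [hc12, hc21]
end

section
/- Let ι₁ and ι₂ be real-valued functions on admissible pairs of n-valued maps on a finite polyhedron X, both satisfying the Homotopy, Additivity, and Splitting axioms. Then ι₁ = ι₂, assuming every admissible pair is admissibly homotopic to a fix-finite pair whose fixed points admit simply connected isolating neighborhoods on which the map splits. -/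
/-- Ordered tuples of n distinct points, up to permutation. -/
def configSetoid (n : ℕ) (Y : Type*) :
    Setoid {t : Fin n → Y // Function.Injective t} where
  r t t' := ∃ σ : Equiv.Perm (Fin n), t.1 = t'.1 ∘ σ
  iseqv := by
    refine ⟨fun t => ⟨Equiv.refl _, rfl⟩, ?_, ?_⟩
    · rintro t t' ⟨σ, h⟩
      exact ⟨σ.symm, by funext i; simp [h]⟩
    · rintro t t' t'' ⟨σ, h⟩ ⟨τ, h'⟩
      exact ⟨σ.trans τ, by funext i; simp [h, h']⟩

/-- The unordered configuration space of n distinct points of Y. -/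
def UConf (n : ℕ) (Y : Type*) [TopologicalSpace Y] : Type _ :=
  Quotient (configSetoid n Y)

instance (n : ℕ) (Y : Type*) [TopologicalSpace Y] : TopologicalSpace (UConf n Y) :=
  inferInstanceAs (TopologicalSpace (Quotient (configSetoid n Y)))

/-- Membership of a point in an unordered configuration. -/
def memUC {n : ℕ} {Y : Type*} [TopologicalSpace Y] (y : Y) (s : UConf n Y) : Prop :=
  ∃ t : {t : Fin n → Y // Function.Injective t},
    (Quotient.mk (configSetoid n Y) t = s) ∧ ∃ i, t.1 i = y

variable {X : Type*} [TopologicalSpace X] {n : ℕ}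

/-- The fixed point set of an n-valued map inside U. -/
def FixIn (f : X → UConf n X) (U : Set X) : Set X :=
  {x | x ∈ U ∧ memUC x (f x)}

/-- Admissible pair: f is a continuous n-valued map, U is open, Fix(f) ∩ U compact. -/
def Adm (f : X → UConf n X) (U : Set X) : Prop :=
  Continuous f ∧ IsOpen U ∧ IsCompact (FixIn f U)

/-- Admissible homotopy between (f,U) and (g,U). -/
def AdmHomotopic (f g : X → UConf n X) (U : Set X) : Prop :=
  ∃ H : X → ℝ → UConf n X, Continuous ↿H ∧
    (∀ x, H x 0 = f x) ∧ (∀ x, H x 1 = g x) ∧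
    IsCompact {p : X × ℝ | p.2 ∈ Set.Icc (0 : ℝ) 1 ∧ p.1 ∈ U ∧ memUC p.1 (H p.1 p.2)}

/-- f splits on U with splitting maps F₁,…,Fₙ. -/
def SplitsOn (f : X → UConf n X) (U : Set X) (F : Fin n → X → X) : Prop :=
  (∀ i, ContinuousOn (F i) U) ∧
  (∀ x ∈ U, Function.Injective fun i => F i x) ∧
  (∀ x ∈ U, ∀ y, memUC y (f x) ↔ ∃ i, F i x = y)

/-- The Homotopy, Additivity, and Splitting axioms for a putative index ι,
relative to the classical single-valued fixed point index `ind`. -/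
def IndexAxioms (ind : (X → X) → Set X → ℝ)
    (ι : (X → UConf n X) → Set X → ℝ) : Prop :=
  -- Homotopy
  (∀ f g U, Adm f U → Adm g U → AdmHomotopic f g U → ι f U = ι g U) ∧
  -- Additivity
  (∀ f U U₁ U₂, Adm f U → IsOpen U₁ → IsOpen U₂ → U₁ ⊆ U → U₂ ⊆ U →
    Disjoint U₁ U₂ → FixIn f U ⊆ U₁ ∪ U₂ → ι f U = ι f U₁ + ι f U₂) ∧
  -- Splitting
  (∀ f U F x, Adm f U → SplitsOn f U F → FixIn f U = {x} →
    ∀ i, F i x = x → ι f U = ind (F i) U)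

lemma FixIn_mono_eq {g : X → UConf n X} {V W : Set X} (h : V ⊆ W) :
    FixIn g V = FixIn g W ∩ V := by
  ext z
  constructor
  · rintro ⟨hz, hm⟩
    exact ⟨⟨h hz, hm⟩, hz⟩
  · rintro ⟨⟨_, hm⟩, hz⟩
    exact ⟨hz, hm⟩

lemma FixIn_empty (g : X → UConf n X) : FixIn g (∅ : Set X) = ∅ := by
  ext z; simp [FixIn]

lemma SplitsOn.mono {g : X → UConf n X} {V V' : Set X} {F : Fin n → X → X}
    (h : SplitsOn g V F) (hV : V' ⊆ V) : SplitsOn g V' F :=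
  ⟨fun i => (h.1 i).mono hV, fun x hx => h.2.1 x (hV hx), fun x hx y => h.2.2 x (hV hx) y⟩

lemma iota_empty {ind : (X → X) → Set X → ℝ} {ι : (X → UConf n X) → Set X → ℝ}
    (hax : IndexAxioms ind ι) {g : X → UConf n X} (hg : Continuous g) :
    ι g ∅ = 0 := by
  have hadm : Adm g (∅ : Set X) := ⟨hg, isOpen_empty, by
    rw [FixIn_empty]; exact isCompact_empty⟩
  have := hax.2.1 g ∅ ∅ ∅ hadm isOpen_empty isOpen_empty (subset_refl _) (subset_refl _)
    (by simp) (by rw [FixIn_empty]; simp)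
  linarith

lemma iota_of_no_fix {ind : (X → X) → Set X → ℝ} {ι : (X → UConf n X) → Set X → ℝ}
    (hax : IndexAxioms ind ι) {g : X → UConf n X} {W : Set X}
    (hadm : Adm g W) (hfix : FixIn g W = ∅) : ι g W = 0 := by
  have := hax.2.1 g W ∅ ∅ hadm isOpen_empty isOpen_empty (Set.empty_subset _)
    (Set.empty_subset _) (by simp) (by rw [hfix]; simp)
  rw [this, iota_empty hax hadm.1]
  ring

lemma key_induction [CompactSpace X] [T2Space X]
    (ind : (X → X) → Set X → ℝ)
    (ι₁ ι₂ : (X → UConf n X) → Set X → ℝ)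
    (h₁ : IndexAxioms ind ι₁) (h₂ : IndexAxioms ind ι₂) :
    ∀ m : ℕ, ∀ (g : X → UConf n X) (W : Set X), Adm g W → (FixIn g W).Finite →
      (FixIn g W).ncard = m →
      (∀ x ∈ FixIn g W, ∃ V : Set X, IsOpen V ∧ x ∈ V ∧ V ⊆ W ∧
        FixIn g W ∩ V = {x} ∧ ∃ F : Fin n → X → X, SplitsOn g V F) →
      ι₁ g W = ι₂ g W := by
  intro m
  induction m with
  | zero =>
      intro g W hadm hfin hcard _
      have hS : FixIn g W = ∅ := (Set.ncard_eq_zero hfin).mp hcard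
      rw [iota_of_no_fix h₁ hadm hS, iota_of_no_fix h₂ hadm hS]
  | succ m ih =>
      intro g W hadm hfin hcard hVhyp
      have hne : (FixIn g W).Nonempty := by
        rw [Set.nonempty_iff_ne_empty]
        intro h
        rw [h] at hcard
        simp at hcard
      obtain ⟨x, hx⟩ := hne
      obtain ⟨V, hVopen, hxV, hVW, hVfix, F, hF⟩ := hVhyp x hx
      -- shrink V to V' with closure V' ⊆ V
      obtain ⟨C, hCmem, hCclosed, hCV⟩ :=
        exists_mem_nhds_isClosed_subset (hVopen.mem_nhds hxV)
      set V' := interior C with hV'def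
      have hxV' : x ∈ V' := mem_interior_iff_mem_nhds.mpr hCmem
      have hclV' : closure V' ⊆ V :=
        (closure_minimal interior_subset hCclosed).trans hCV
      have hV'V : V' ⊆ V := fun z hz => hclV' (subset_closure hz)
      have hV'W : V' ⊆ W := hV'V.trans hVW
      set U₂ := W \ closure V' with hU₂def
      have hU₂open : IsOpen U₂ := hadm.2.1.sdiff isClosed_closure
      have hU₂W : U₂ ⊆ W := Set.diff_subset
      -- FixIn g V' = {x}
      have hFixV' : FixIn g V' = {x} := by
        rw [FixIn_mono_eq hV'W]
        apply subset_antisymm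
        · intro z ⟨hzS, hzV'⟩
          have : z ∈ FixIn g W ∩ V := ⟨hzS, hV'V hzV'⟩
          rw [hVfix] at this
          exact this
        · intro z hz
          rw [Set.mem_singleton_iff] at hz
          subst hz
          exact ⟨hx, hxV'⟩
      have hAdmV' : Adm g V' := ⟨hadm.1, isOpen_interior, by
        rw [hFixV']; exact isCompact_singleton⟩
      -- FixIn g U₂ = FixIn g W \ {x}
      have hFixU₂ : FixIn g U₂ = FixIn g W \ {x} := by
        rw [FixIn_mono_eq hU₂W]
        ext z
        constructor
        · rintro ⟨hzS, hzW, hzcl⟩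
          refine ⟨hzS, ?_⟩
          intro h
          rw [Set.mem_singleton_iff] at h
          subst h
          exact hzcl (subset_closure hxV')
        · rintro ⟨hzS, hzx⟩
          refine ⟨hzS, hzS.1, ?_⟩
          intro hzcl
          apply hzx
          have : z ∈ FixIn g W ∩ V := ⟨hzS, hclV' hzcl⟩
          rw [hVfix] at this
          exact this
      have hfinU₂ : (FixIn g U₂).Finite := by
        rw [hFixU₂]; exact hfin.diff
      have hAdmU₂ : Adm g U₂ := ⟨hadm.1, hU₂open, hfinU₂.isCompact⟩
      have hcardU₂ : (FixIn g U₂).ncard = m := by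
        rw [hFixU₂, Set.ncard_diff_singleton_of_mem hx, hcard]; omega
      -- isolating neighborhoods for U₂
      have hVhypU₂ : ∀ y ∈ FixIn g U₂, ∃ Vy : Set X, IsOpen Vy ∧ y ∈ Vy ∧ Vy ⊆ U₂ ∧
          FixIn g U₂ ∩ Vy = {y} ∧ ∃ Fy : Fin n → X → X, SplitsOn g Vy Fy := by
        intro y hy
        have hyU₂ : y ∈ U₂ := hy.1
        have hyS : y ∈ FixIn g W \ {x} := by rwa [hFixU₂] at hy
        obtain ⟨Vy, hop, hyVy, hVyW, hfixy, Fy, hFy⟩ := hVhyp y hyS.1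
        refine ⟨Vy ∩ U₂, hop.inter hU₂open, ⟨hyVy, hyU₂⟩, Set.inter_subset_right, ?_,
          Fy, hFy.mono Set.inter_subset_left⟩
        apply subset_antisymm
        · rintro z ⟨hzS, hzVy, _⟩
          rw [hFixU₂] at hzS
          have : z ∈ FixIn g W ∩ Vy := ⟨hzS.1, hzVy⟩
          rw [hfixy] at this
          exact this
        · intro z hz
          rw [Set.mem_singleton_iff] at hz
          subst hz
          exact ⟨hy, hyVy, hyU₂⟩
      -- splitting at x
      have hmem : memUC x (g x) := hx.2
      obtain ⟨i, hi⟩ := (hF.2.2 x hxV x).mp hmem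
      have hsplitV' : SplitsOn g V' F := hF.mono hV'V
      have hv₁ : ι₁ g V' = ind (F i) V' := h₁.2.2 g V' F x hAdmV' hsplitV' hFixV' i hi
      have hv₂ : ι₂ g V' = ind (F i) V' := h₂.2.2 g V' F x hAdmV' hsplitV' hFixV' i hi
      -- additivity
      have hdisj : Disjoint V' U₂ := by
        rw [Set.disjoint_left]
        intro z hz hz'
        exact hz'.2 (subset_closure hz)
      have hcover : FixIn g W ⊆ V' ∪ U₂ := by
        intro z hz
        by_cases hzx : z = x
        · subst hzx; exact Or.inl hxV'
        · refine Or.inr ⟨hz.1, ?_⟩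
          intro hzcl
          apply hzx
          have : z ∈ FixIn g W ∩ V := ⟨hz, hclV' hzcl⟩
          rw [hVfix] at this
          exact this
      have e₁ : ι₁ g W = ι₁ g V' + ι₁ g U₂ :=
        h₁.2.1 g W V' U₂ hadm isOpen_interior hU₂open hV'W hU₂W hdisj hcover
      have e₂ : ι₂ g W = ι₂ g V' + ι₂ g U₂ :=
        h₂.2.1 g W V' U₂ hadm isOpen_interior hU₂open hV'W hU₂W hdisj hcover
      have hrec := ih g U₂ hAdmU₂ hfinU₂ hcardU₂ hVhypU₂
      rw [e₁, e₂, hv₁, hv₂, hrec]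

/-- Uniqueness of the n-valued fixed point index: two real-valued functions on
admissible pairs of n-valued maps on a compact space, both satisfying the
Homotopy, Additivity, and Splitting axioms, coincide — assuming every admissible
pair is admissibly homotopic to a fix-finite pair whose fixed points admit simply
connected isolating neighborhoods on which the map splits. -/
theorem index_uniqueness [CompactSpace X] [T2Space X]
    (ind : (X → X) → Set X → ℝ)
    (ι₁ ι₂ : (X → UConf n X) → Set X → ℝ)
    (h₁ : IndexAxioms ind ι₁) (h₂ : IndexAxioms ind ι₂)
    (hFF : ∀ f U, Adm f U → ∃ g : X → UConf n X, Adm g U ∧ AdmHomotopic f g U ∧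
      (FixIn g U).Finite ∧
      ∀ x ∈ FixIn g U, ∃ V : Set X, IsOpen V ∧ x ∈ V ∧ V ⊆ U ∧
        FixIn g U ∩ V = {x} ∧ SimplyConnectedSpace V ∧
        ∃ F : Fin n → X → X, SplitsOn g V F) :
    ∀ f U, Adm f U → ι₁ f U = ι₂ f U := by
  intro f U hadm
  obtain ⟨g, hg, hhom, hfin, hV⟩ := hFF f U hadm
  rw [h₁.1 f g U hadm hg hhom, h₂.1 f g U hadm hg hhom]
  refine key_induction ind ι₁ ι₂ h₁ h₂ (FixIn g U).ncard g U hg hfin rfl ?_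
  intro x hx
  obtain ⟨V, hop, hxV, hVU, hfix, _, F, hF⟩ := hV x hx
  exact ⟨V, hop, hxV, hVU, hfix, F, hF⟩
end
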